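/- Every order automorphism of ℝ × ℝ with the product order is a homeomorphism of ℝ² with the standard topology (continuity follows automatically from being an order automorphism). -/

import Mathlib

/-- Order-theoretic characterization of the componentwise-strict relation on `ℝ × ℝ`. -/
lemma strict_iff_aux (a x : ℝ × ℝ) :
    (a.1 < x.1 ∧ a.2 < x.2) ↔
      ∃ b c : ℝ × ℝ, a ≤ b ∧ a ≤ c ∧ ¬ b ≤ c ∧ ¬ c ≤ b ∧ b ⊔ c = x := by
  constructor
  · rintro ⟨h1, h2⟩
    refine ⟨(a.1, x.2), (x.1, a.2), ⟨le_refl _, h2.le⟩, ⟨h1.le, le_refl _⟩, ?_, ?_, ?_⟩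
    · rw [Prod.le_def]; push_neg; intro _; exact h2
    · rw [Prod.le_def]; push_neg; intro h; exact absurd h (not_le.2 h1)
    · simp [Prod.ext_iff, max_eq_right h1.le, max_eq_left h2.le]
  · rintro ⟨b, c, hab, hac, hbc, hcb, hx⟩
    rw [Prod.le_def] at hab hac
    rw [Prod.le_def, not_and_or, not_le, not_le] at hbc hcb
    have hx1 : x.1 = max b.1 c.1 := by rw [← hx]; rfl
    have hx2 : x.2 = max b.2 c.2 := by rw [← hx]; rfl
    rcases hbc with h | h
    · -- c.1 < b.1, so (since ¬ c ≤ b) b.2 < c.2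
      have h2 : b.2 < c.2 := by
        rcases hcb with h' | h'
        · exact absurd h' (not_lt.2 h.le)
        · exact h'
      constructor
      · rw [hx1]; exact lt_of_le_of_lt hac.1 (lt_max_of_lt_left h)
      · rw [hx2]; exact lt_of_le_of_lt hab.2 (lt_max_of_lt_right h2)
    · -- c.2 < b.2, so b.1 < c.1
      have h1 : b.1 < c.1 := by
        rcases hcb with h' | h'
        · exact h'
        · exact absurd h' (not_lt.2 h.le)
      constructor
      · rw [hx1]; exact lt_of_le_of_lt hab.1 (lt_max_of_lt_right h1)
      · rw [hx2]; exact lt_of_le_of_lt hac.2 (lt_max_of_lt_left h)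

lemma strict_preserve_mp (G : (ℝ × ℝ) ≃o (ℝ × ℝ)) (a x : ℝ × ℝ)
    (h : a.1 < x.1 ∧ a.2 < x.2) : (G a).1 < (G x).1 ∧ (G a).2 < (G x).2 := by
  rw [strict_iff_aux] at h ⊢
  obtain ⟨b, c, hab, hac, hbc, hcb, hx⟩ := h
  refine ⟨G b, G c, G.le_iff_le.2 hab, G.le_iff_le.2 hac,
    fun hh => hbc (G.le_iff_le.1 hh), fun hh => hcb (G.le_iff_le.1 hh), ?_⟩
  rw [← OrderIso.map_sup, hx]

lemma strict_preserve (G : (ℝ × ℝ) ≃o (ℝ × ℝ)) (a x : ℝ × ℝ) :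
    (a.1 < x.1 ∧ a.2 < x.2) ↔ (G a).1 < (G x).1 ∧ (G a).2 < (G x).2 := by
  constructor
  · exact strict_preserve_mp G a x
  · intro h
    have := strict_preserve_mp G.symm (G a) (G x) h
    simpa using this

lemma orderiso_continuous (G : (ℝ × ℝ) ≃o (ℝ × ℝ)) : Continuous ⇑G := by
  rw [continuous_def]
  intro s hs
  rw [isOpen_iff_forall_mem_open]
  intro x hx
  have hGx : G x ∈ s := hx
  rw [isOpen_prod_iff] at hs
  obtain ⟨u, v, hu, hv, h1, h2, huv⟩ := hs (G x).1 (G x).2 hGx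
  obtain ⟨l1, u1, hI1, hI1u⟩ := mem_nhds_iff_exists_Ioo_subset.1 (hu.mem_nhds h1)
  obtain ⟨l2, u2, hI2, hI2u⟩ := mem_nhds_iff_exists_Ioo_subset.1 (hv.mem_nhds h2)
  set L : ℝ × ℝ := (l1, l2)
  set U : ℝ × ℝ := (u1, u2)
  refine ⟨Set.Ioo (G.symm L).1 (G.symm U).1 ×ˢ Set.Ioo (G.symm L).2 (G.symm U).2, ?_,
    (isOpen_Ioo.prod isOpen_Ioo), ?_⟩
  · intro p hp
    obtain ⟨⟨hp1, hp2⟩, hp3, hp4⟩ := hp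
    have hl : (G (G.symm L)).1 < (G p).1 ∧ (G (G.symm L)).2 < (G p).2 :=
      (strict_preserve G _ p).1 ⟨hp1, hp3⟩
    have hr : (G p).1 < (G (G.symm U)).1 ∧ (G p).2 < (G (G.symm U)).2 :=
      (strict_preserve G p _).1 ⟨hp2, hp4⟩
    rw [G.apply_symm_apply] at hl hr
    exact huv ⟨hI1u ⟨hl.1, hr.1⟩, hI2u ⟨hl.2, hr.2⟩⟩
  · have hl : (G.symm L).1 < x.1 ∧ (G.symm L).2 < x.2 := by
      rw [strict_preserve G, G.apply_symm_apply]
      exact ⟨hI1.1, hI2.1⟩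
    have hr : x.1 < (G.symm U).1 ∧ x.2 < (G.symm U).2 := by
      rw [strict_preserve G, G.apply_symm_apply]
      exact ⟨hI1.2, hI2.2⟩
    exact ⟨⟨hl.1, hr.1⟩, ⟨hl.2, hr.2⟩⟩

theorem stmt_6 (F : ℝ × ℝ → ℝ × ℝ)
    (hsurj : Function.Surjective F)
    (hiff : ∀ p q : ℝ × ℝ, p ≤ q ↔ F p ≤ F q) :
    ∃ H : ℝ × ℝ ≃ₜ ℝ × ℝ, ∀ p, H p = F p := by
  have hinj : Function.Injective F := by
    intro p q h
    exact le_antisymm ((hiff p q).2 h.le) ((hiff q p).2 h.ge)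
  let e : (ℝ × ℝ) ≃o (ℝ × ℝ) :=
    { toEquiv := Equiv.ofBijective F ⟨hinj, hsurj⟩
      map_rel_iff' := fun {p q} => (hiff p q).symm }
  exact ⟨{ toEquiv := e.toEquiv
           continuous_toFun := orderiso_continuous e
           continuous_invFun := orderiso_continuous e.symm }, fun p => rfl⟩
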